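/- Suppose every tail of F_θ^+ is eventually (a,−b)-periodic for positive integers a, b and m ≥ 2. Then condition (i) fails: for every v ∈ n^b, the word u' in the unique factorization e_u f_v = f_{v'} e_{u'} depends only on v and not on u ∈ m^a. -/

import Mathlib

namespace Stmt18

variable {m n : ℕ}

/-- push one e-generator down past a column of f-generators -/
def pF (θ : Equiv.Perm (Fin m × Fin n)) : Fin m → List (Fin n) → List (Fin n) × Fin m
  | i, [] => ([], i)
  | i, j :: rest =>
      ((θ (i, j)).2 :: (pF θ (θ (i, j)).1 rest).1, (pF θ (θ (i, j)).1 rest).2)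

/-- push an e-word down past a column of f-generators -/
def pFs (θ : Equiv.Perm (Fin m × Fin n)) :
    List (Fin m) → List (Fin n) → List (Fin n) × List (Fin m)
  | [], v => (v, [])
  | i :: u, v =>
      ((pF θ i (pFs θ u v).1).1, (pF θ i (pFs θ u v).1).2 :: (pFs θ u v).2)

@[simp] lemma pF_nil (θ : Equiv.Perm (Fin m × Fin n)) (i : Fin m) : pF θ i [] = ([], i) := rfl

@[simp] lemma pF_cons (θ : Equiv.Perm (Fin m × Fin n)) (i : Fin m) (j : Fin n)
    (rest : List (Fin n)) :
    pF θ i (j :: rest) =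
      ((θ (i, j)).2 :: (pF θ (θ (i, j)).1 rest).1, (pF θ (θ (i, j)).1 rest).2) := rfl

@[simp] lemma pFs_nil (θ : Equiv.Perm (Fin m × Fin n)) (v : List (Fin n)) :
    pFs θ [] v = (v, []) := rfl

@[simp] lemma pFs_cons (θ : Equiv.Perm (Fin m × Fin n)) (i : Fin m) (u : List (Fin m))
    (v : List (Fin n)) :
    pFs θ (i :: u) v =
      ((pF θ i (pFs θ u v).1).1, (pF θ i (pFs θ u v).1).2 :: (pFs θ u v).2) := rfl

@[simp] lemma pF_len (θ : Equiv.Perm (Fin m × Fin n)) :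
    ∀ (w : List (Fin n)) (i : Fin m), (pF θ i w).1.length = w.length := by
  intro w
  induction w with
  | nil => intro i; simp
  | cons j rest ih => intro i; simp [ih]

@[simp] lemma pFs_len1 (θ : Equiv.Perm (Fin m × Fin n)) :
    ∀ (u : List (Fin m)) (v : List (Fin n)), (pFs θ u v).1.length = v.length := by
  intro u
  induction u with
  | nil => intro v; simp
  | cons i u ih => intro v; simp [ih]

@[simp] lemma pFs_len2 (θ : Equiv.Perm (Fin m × Fin n)) :
    ∀ (u : List (Fin m)) (v : List (Fin n)), (pFs θ u v).2.length = u.length := by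
  intro u
  induction u with
  | nil => intro v; simp
  | cons i u ih => intro v; simp [ih]

lemma pF_append (θ : Equiv.Perm (Fin m × Fin n)) :
    ∀ (w₁ w₂ : List (Fin n)) (i : Fin m),
      pF θ i (w₁ ++ w₂) =
        ((pF θ i w₁).1 ++ (pF θ (pF θ i w₁).2 w₂).1, (pF θ (pF θ i w₁).2 w₂).2) := by
  intro w₁
  induction w₁ with
  | nil => intro w₂ i; simp
  | cons j rest ih => intro w₂ i; simp [ih]

/-- inverse pushing (upwards), processing the column bottom-up -/
def auxUp (θ : Equiv.Perm (Fin m × Fin n)) : Fin m → List (Fin n) → Fin m × List (Fin n)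
  | i, [] => (i, [])
  | i, j :: rest =>
      ((auxUp θ (θ.symm (i, j)).1 rest).1,
        (θ.symm (i, j)).2 :: (auxUp θ (θ.symm (i, j)).1 rest).2)

@[simp] lemma auxUp_nil (θ : Equiv.Perm (Fin m × Fin n)) (i : Fin m) :
    auxUp θ i [] = (i, []) := rfl

@[simp] lemma auxUp_cons (θ : Equiv.Perm (Fin m × Fin n)) (i : Fin m) (j : Fin n)
    (rest : List (Fin n)) :
    auxUp θ i (j :: rest) =
      ((auxUp θ (θ.symm (i, j)).1 rest).1,
        (θ.symm (i, j)).2 :: (auxUp θ (θ.symm (i, j)).1 rest).2) := rfl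

lemma auxUp_append (θ : Equiv.Perm (Fin m × Fin n)) :
    ∀ (l₁ l₂ : List (Fin n)) (i : Fin m),
      auxUp θ i (l₁ ++ l₂) =
        ((auxUp θ (auxUp θ i l₁).1 l₂).1,
          (auxUp θ i l₁).2 ++ (auxUp θ (auxUp θ i l₁).1 l₂).2) := by
  intro l₁
  induction l₁ with
  | nil => intro l₂ i; simp
  | cons j rest ih => intro l₂ i; simp [ih]

@[simp] lemma auxUp_len (θ : Equiv.Perm (Fin m × Fin n)) :
    ∀ (w : List (Fin n)) (i : Fin m), (auxUp θ i w).2.length = w.length := by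
  intro w
  induction w with
  | nil => intro i; simp
  | cons j rest ih => intro i; simp [ih]

def pFinv (θ : Equiv.Perm (Fin m × Fin n)) (w' : List (Fin n)) (i' : Fin m) :
    Fin m × List (Fin n) :=
  ((auxUp θ i' w'.reverse).1, ((auxUp θ i' w'.reverse).2).reverse)

lemma pF_auxUp (θ : Equiv.Perm (Fin m × Fin n)) :
    ∀ (rl : List (Fin n)) (i' : Fin m),
      pF θ (auxUp θ i' rl).1 ((auxUp θ i' rl).2).reverse = (rl.reverse, i') := by
  intro rl
  induction rl with
  | nil => intro i'; simp
  | cons j' rest ih =>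
      intro i'
      have key := ih (θ.symm (i', j')).1
      simp only [auxUp_cons, List.reverse_cons]
      rw [pF_append, key]
      simp

lemma pF_pFinv (θ : Equiv.Perm (Fin m × Fin n)) (w' : List (Fin n)) (i' : Fin m) :
    pF θ (pFinv θ w' i').1 (pFinv θ w' i').2 = (w', i') := by
  have := pF_auxUp θ w'.reverse i'
  simpa [pFinv] using this

lemma auxUp_pF (θ : Equiv.Perm (Fin m × Fin n)) :
    ∀ (w : List (Fin n)) (i : Fin m),
      auxUp θ (pF θ i w).2 ((pF θ i w).1).reverse = (i, w.reverse) := by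
  intro w
  induction w with
  | nil => intro i; simp
  | cons j rest ih =>
      intro i
      have key := ih (θ (i, j)).1
      simp only [pF_cons, List.reverse_cons]
      rw [auxUp_append, key]
      simp

lemma pFinv_pF (θ : Equiv.Perm (Fin m × Fin n)) (i : Fin m) (w : List (Fin n)) :
    pFinv θ (pF θ i w).1 (pF θ i w).2 = (i, w) := by
  have := auxUp_pF θ w i
  simp [pFinv, this]

def pFsinv (θ : Equiv.Perm (Fin m × Fin n)) :
    List (Fin n) → List (Fin m) → List (Fin m) × List (Fin n)
  | v', [] => ([], v')
  | v', i' :: u' =>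
      ((pFinv θ v' i').1 :: (pFsinv θ (pFinv θ v' i').2 u').1,
        (pFsinv θ (pFinv θ v' i').2 u').2)

@[simp] lemma pFsinv_nil (θ : Equiv.Perm (Fin m × Fin n)) (v' : List (Fin n)) :
    pFsinv θ v' [] = ([], v') := rfl

@[simp] lemma pFsinv_cons (θ : Equiv.Perm (Fin m × Fin n)) (v' : List (Fin n)) (i' : Fin m)
    (u' : List (Fin m)) :
    pFsinv θ v' (i' :: u') =
      ((pFinv θ v' i').1 :: (pFsinv θ (pFinv θ v' i').2 u').1,
        (pFsinv θ (pFinv θ v' i').2 u').2) := rfl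

lemma pFs_pFsinv (θ : Equiv.Perm (Fin m × Fin n)) :
    ∀ (u' : List (Fin m)) (v' : List (Fin n)),
      pFs θ (pFsinv θ v' u').1 (pFsinv θ v' u').2 = (v', u') := by
  intro u'
  induction u' with
  | nil => intro v'; simp
  | cons i' u' ih =>
      intro v'
      have key := ih (pFinv θ v' i').2
      simp only [pFsinv_cons, pFs_cons, key, pF_pFinv]

lemma pFsinv_pFs (θ : Equiv.Perm (Fin m × Fin n)) :
    ∀ (u : List (Fin m)) (v : List (Fin n)),
      pFsinv θ (pFs θ u v).1 (pFs θ u v).2 = (u, v) := by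
  intro u
  induction u with
  | nil => intro v; simp
  | cons i u ih =>
      intro v
      simp only [pFs_cons, pFsinv_cons, pFinv_pF, ih v]

@[simp] lemma pFsinv_len1 (θ : Equiv.Perm (Fin m × Fin n)) (v' : List (Fin n))
    (u' : List (Fin m)) : (pFsinv θ v' u').1.length = u'.length := by
  have h := pFs_pFsinv θ u' v'
  have := congrArg (fun p => p.2.length) h
  simpa using this

@[simp] lemma pFsinv_len2 (θ : Equiv.Perm (Fin m × Fin n)) (v' : List (Fin n))
    (u' : List (Fin m)) : (pFsinv θ v' u').2.length = v'.length := by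
  have h := pFs_pFsinv θ u' v'
  have := congrArg (fun p => p.1.length) h
  simpa using this

/-- key single-cell lemma: the θ-relation between partial pushes -/
lemma pF_take_getD (θ : Equiv.Perm (Fin m × Fin n)) (dn : Fin n) :
    ∀ (c : ℕ) (X : List (Fin n)) (i : Fin m), c < X.length →
      θ ((pF θ i (X.take c)).2, X.getD c dn) =
        ((pF θ i (X.take (c + 1))).2, ((pF θ i X).1).getD c dn) := by
  intro c
  induction c with
  | zero =>
      intro X i hc
      match X with
      | x :: xs => simp
  | succ c ih =>
      intro X i hc
      match X with
      | x :: xs =>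
          have hc' : c < xs.length := by simpa using hc
          have := ih xs (θ (i, x)).1 hc'
          simpa using this

/-- reading off an entry of the bottom word of a block push -/
lemma pFs_snd_getD (θ : Equiv.Perm (Fin m × Fin n)) (dm : Fin m) :
    ∀ (W : List (Fin m)) (V : List (Fin n)) (r : ℕ), r < W.length →
      ((pFs θ W V).2).getD r dm =
        (pF θ (W.getD r dm) ((pFs θ (W.drop (r + 1)) V).1)).2 := by
  intro W
  induction W with
  | nil => intro V r hr; simp at hr
  | cons w ws ih =>
      intro V r hr
      match r with
      | 0 => simp
      | r + 1 =>
          have hr' : r < ws.length := by simpa using hr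
          simpa using ih V r hr'


/-- forward block recursion (region on/below the block staircase) -/
def QB (θ : Equiv.Perm (Fin m × Fin n)) (B : ℤ → List (Fin m)) (v : List (Fin n)) :
    ℕ → ℤ → List (Fin m) × List (Fin n)
  | 0, k => (B k, v)
  | d + 1, k =>
      ((pFs θ (QB θ B v d k).1 (QB θ B v d k).2).2,
        (pFs θ (QB θ B v d (k + 1)).1 (QB θ B v d (k + 1)).2).1)

/-- backward block recursion (region above the block staircase) -/
def RB (θ : Equiv.Perm (Fin m × Fin n)) (B : ℤ → List (Fin m)) (v : List (Fin n)) :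
    ℕ → ℤ → List (Fin m) × List (Fin n)
  | 0, k => (B k, v)
  | d + 1, k => pFsinv θ (RB θ B v d (k - 1)).2 (RB θ B v d k).1

/-- block grid: e-word entering the top of block (k,l) -/
def Ublk (θ : Equiv.Perm (Fin m × Fin n)) (B : ℤ → List (Fin m)) (v : List (Fin n))
    (k l : ℤ) : List (Fin m) :=
  if k ≤ l then (QB θ B v (l - k).toNat k).1 else (RB θ B v (k - l).toNat k).1

/-- block grid: f-word entering the left of block (k,l) -/
def Vblk (θ : Equiv.Perm (Fin m × Fin n)) (B : ℤ → List (Fin m)) (v : List (Fin n))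
    (k l : ℤ) : List (Fin n) :=
  if k ≤ l then (QB θ B v (l - k).toNat k).2 else (RB θ B v (k - l).toNat k).2

section Blk

variable (θ : Equiv.Perm (Fin m × Fin n)) (B : ℤ → List (Fin m)) (v : List (Fin n))

lemma UblkQ {k l : ℤ} (h : k ≤ l) : Ublk θ B v k l = (QB θ B v (l - k).toNat k).1 :=
  if_pos h

lemma VblkQ {k l : ℤ} (h : k ≤ l) : Vblk θ B v k l = (QB θ B v (l - k).toNat k).2 :=
  if_pos h

lemma UblkR {k l : ℤ} (h : l ≤ k) : Ublk θ B v k l = (RB θ B v (k - l).toNat k).1 := by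
  rcases eq_or_lt_of_le h with heq | h'
  · subst heq
    have h0 : (l - l).toNat = 0 := by omega
    rw [Ublk, if_pos le_rfl, h0]
    rfl
  · rw [Ublk, if_neg (by omega)]

lemma VblkR {k l : ℤ} (h : l ≤ k) : Vblk θ B v k l = (RB θ B v (k - l).toNat k).2 := by
  rcases eq_or_lt_of_le h with heq | h'
  · subst heq
    have h0 : (l - l).toNat = 0 := by omega
    rw [Vblk, if_pos le_rfl, h0]
    rfl
  · rw [Vblk, if_neg (by omega)]

@[simp] lemma Ukk (k : ℤ) : Ublk θ B v k k = B k := by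
  have : (k - k).toNat = 0 := by omega
  rw [UblkQ θ B v le_rfl, this]; rfl

@[simp] lemma Vkk (k : ℤ) : Vblk θ B v k k = v := by
  have : (k - k).toNat = 0 := by omega
  rw [VblkQ θ B v le_rfl, this]; rfl

/-- block relation, bottom output -/
lemma blkB1 (k l : ℤ) :
    Ublk θ B v k (l + 1) = (pFs θ (Ublk θ B v k l) (Vblk θ B v k l)).2 := by
  rcases le_or_gt k l with h | h
  · have h1 : (l + 1 - k).toNat = (l - k).toNat + 1 := by omega
    rw [UblkQ θ B v (by omega), h1, UblkQ θ B v h, VblkQ θ B v h]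
    rfl
  · set e : ℕ := (k - (l + 1)).toNat with he
    have h2 : (k - l).toNat = e + 1 := by omega
    have hu : Ublk θ B v k l = (RB θ B v (e + 1) k).1 := by rw [UblkR θ B v (by omega), h2]
    have hv : Vblk θ B v k l = (RB θ B v (e + 1) k).2 := by rw [VblkR θ B v (by omega), h2]
    have hrb : RB θ B v (e + 1) k = pFsinv θ (RB θ B v e (k - 1)).2 (RB θ B v e k).1 := rfl
    have hps : pFs θ (Ublk θ B v k l) (Vblk θ B v k l) =
        ((RB θ B v e (k - 1)).2, (RB θ B v e k).1) := by
      rw [hu, hv, hrb]; exact pFs_pFsinv θ _ _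
    rw [hps, UblkR θ B v (by omega), ← he]

/-- block relation, right output -/
lemma blkB2 (k l : ℤ) :
    Vblk θ B v (k - 1) l = (pFs θ (Ublk θ B v k l) (Vblk θ B v k l)).1 := by
  rcases le_or_gt k l with h | h
  · have h1 : (l - (k - 1)).toNat = (l - k).toNat + 1 := by omega
    rw [VblkQ θ B v (by omega), h1, UblkQ θ B v h, VblkQ θ B v h]
    show (pFs θ (QB θ B v (l-k).toNat (k-1+1)).1 (QB θ B v (l-k).toNat (k-1+1)).2).1 = _
    norm_num
  · set e : ℕ := (k - (l + 1)).toNat with he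
    have h2 : (k - l).toNat = e + 1 := by omega
    have hu : Ublk θ B v k l = (RB θ B v (e + 1) k).1 := by rw [UblkR θ B v (by omega), h2]
    have hv : Vblk θ B v k l = (RB θ B v (e + 1) k).2 := by rw [VblkR θ B v (by omega), h2]
    have hrb : RB θ B v (e + 1) k = pFsinv θ (RB θ B v e (k - 1)).2 (RB θ B v e k).1 := rfl
    have hps : pFs θ (Ublk θ B v k l) (Vblk θ B v k l) =
        ((RB θ B v e (k - 1)).2, (RB θ B v e k).1) := by
      rw [hu, hv, hrb]; exact pFs_pFsinv θ _ _
    have h3 : (k - 1 - l).toNat = e := by omega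
    rw [hps, VblkR θ B v (by omega), h3]

variable {a b : ℕ}

lemma QB_len (hB : ∀ k, (B k).length = a) (hv : v.length = b) :
    ∀ (d : ℕ) (k : ℤ), (QB θ B v d k).1.length = a ∧ (QB θ B v d k).2.length = b := by
  intro d
  induction d with
  | zero => intro k; exact ⟨hB k, hv⟩
  | succ d ih =>
      intro k
      constructor
      · show (pFs θ (QB θ B v d k).1 (QB θ B v d k).2).2.length = a
        rw [pFs_len2]; exact (ih k).1
      · show (pFs θ (QB θ B v d (k+1)).1 (QB θ B v d (k+1)).2).1.length = b
        rw [pFs_len1]; exact (ih (k+1)).2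

lemma RB_len (hB : ∀ k, (B k).length = a) (hv : v.length = b) :
    ∀ (d : ℕ) (k : ℤ), (RB θ B v d k).1.length = a ∧ (RB θ B v d k).2.length = b := by
  intro d
  induction d with
  | zero => intro k; exact ⟨hB k, hv⟩
  | succ d ih =>
      intro k
      constructor
      · show (pFsinv θ (RB θ B v d (k-1)).2 (RB θ B v d k).1).1.length = a
        rw [pFsinv_len1]; exact (ih k).1
      · show (pFsinv θ (RB θ B v d (k-1)).2 (RB θ B v d k).1).2.length = b
        rw [pFsinv_len2]; exact (ih (k-1)).2

lemma Ublk_len (hB : ∀ k, (B k).length = a) (hv : v.length = b) (k l : ℤ) :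
    (Ublk θ B v k l).length = a := by
  rcases le_or_gt k l with h | h
  · rw [UblkQ θ B v h]; exact (QB_len θ B v hB hv _ _).1
  · rw [UblkR θ B v h.le]; exact (RB_len θ B v hB hv _ _).1

lemma Vblk_len (hB : ∀ k, (B k).length = a) (hv : v.length = b) (k l : ℤ) :
    (Vblk θ B v k l).length = b := by
  rcases le_or_gt k l with h | h
  · rw [VblkQ θ B v h]; exact (QB_len θ B v hB hv _ _).2
  · rw [VblkR θ B v h.le]; exact (RB_len θ B v hB hv _ _).2

end Blk


/-- block-column index of cell column s -/
def iq (a : ℕ) (s : ℤ) : ℤ := (-s) / (a : ℤ)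

/-- within-block column offset of cell column s -/
def ir (a : ℕ) (s : ℤ) : ℕ := ((-s) % (a : ℤ)).toNat

lemma iq_ir_spec {a : ℕ} (ha : 0 < a) (s : ℤ) :
    (-s) = (a : ℤ) * iq a s + (ir a s : ℤ) ∧ ir a s < a := by
  have hA : (a : ℤ) ≠ 0 := by exact_mod_cast ha.ne'
  have h1 := Int.mul_ediv_add_emod (-s) (a : ℤ)
  have h2 : 0 ≤ (-s) % (a : ℤ) := Int.emod_nonneg _ hA
  have h3 : (-s) % (a : ℤ) < a := Int.emod_lt_of_pos _ (by exact_mod_cast ha)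
  constructor
  · rw [iq, ir, Int.toNat_of_nonneg h2]; omega
  · rw [ir]; omega

lemma iq_ir_unique {a : ℕ} (ha : 0 < a) (s : ℤ) (k : ℤ) (r : ℕ)
    (hr : r < a) (hs : -s = (a : ℤ) * k + r) : iq a s = k ∧ ir a s = r := by
  have hA : (a : ℤ) ≠ 0 := by exact_mod_cast ha.ne'
  have hdiv : (-s) / (a : ℤ) = k := by
    rw [hs]
    have : ((r : ℤ) + k * a) / (a : ℤ) = (r : ℤ) / a + k := Int.add_mul_ediv_right _ _ hA
    have hz : (r : ℤ) / (a : ℤ) = 0 :=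
      Int.ediv_eq_zero_of_lt (by positivity) (by exact_mod_cast hr)
    rw [show (a : ℤ) * k + r = (r : ℤ) + k * a by ring, this, hz]; ring
  have hmod : (-s) % (a : ℤ) = r := by
    rw [hs, show (a : ℤ) * k + r = (r : ℤ) + k * a by ring, Int.add_mul_emod_self_right]
    exact Int.emod_eq_of_lt (by positivity) (by exact_mod_cast hr)
  refine ⟨hdiv, ?_⟩
  rw [ir, hmod]; simp

/-- shifting one cell to the left / down within or across a block -/
lemma iq_ir_pred {a : ℕ} (ha : 0 < a) (s : ℤ) :
    (ir a s + 1 < a ∧ iq a (s - 1) = iq a s ∧ ir a (s - 1) = ir a s + 1) ∨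
    (ir a s + 1 = a ∧ iq a (s - 1) = iq a s + 1 ∧ ir a (s - 1) = 0) := by
  obtain ⟨hspec, hlt⟩ := iq_ir_spec ha s
  rcases lt_or_eq_of_le (Nat.succ_le_of_lt hlt) with h | h
  · left
    refine ⟨h, ?_⟩
    have := iq_ir_unique ha (s - 1) (iq a s) (ir a s + 1) h (by push_cast; omega)
    exact ⟨this.1, this.2⟩
  · right
    refine ⟨h, ?_⟩
    have := iq_ir_unique ha (s - 1) (iq a s + 1) 0 ha (by
      have hh : (a : ℤ) * (iq a s + 1) = (a : ℤ) * iq a s + a := by ring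
      rw [hh]; push_cast at hspec ⊢; omega)
    exact ⟨this.1, this.2⟩

/-- cell value of the e-grid -/
def cellE (θ : Equiv.Perm (Fin m × Fin n)) (a b : ℕ) (B : ℤ → List (Fin m))
    (v : List (Fin n)) (dm : Fin m) (s t : ℤ) : Fin m :=
  (pF θ ((Ublk θ B v (iq a s) (iq b t)).getD (ir a s) dm)
    (((pFs θ ((Ublk θ B v (iq a s) (iq b t)).drop (ir a s + 1))
        (Vblk θ B v (iq a s) (iq b t))).1).take (ir b t))).2

/-- cell value of the f-grid -/
def cellF (θ : Equiv.Perm (Fin m × Fin n)) (a b : ℕ) (B : ℤ → List (Fin m))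
    (v : List (Fin n)) (dn : Fin n) (s t : ℤ) : Fin n :=
  ((pFs θ ((Ublk θ B v (iq a s) (iq b t)).drop (ir a s))
      (Vblk θ B v (iq a s) (iq b t))).1).getD (ir b t) dn

section Cells

variable (θ : Equiv.Perm (Fin m × Fin n)) {a b : ℕ} (B : ℤ → List (Fin m))
  (v : List (Fin n)) (dm : Fin m) (dn : Fin n)

/-- the constructed grid satisfies the θ-commutation relation everywhere -/
lemma cell_compat (ha : 0 < a) (hb : 0 < b) (hB : ∀ k, (B k).length = a)
    (hv : v.length = b) (s t : ℤ) :
    θ (cellE θ a b B v dm s t, cellF θ a b B v dn (s - 1) t) =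
      (cellE θ a b B v dm s (t - 1), cellF θ a b B v dn s t) := by
  set K := iq a s with hK
  set R := ir a s with hR
  set L := iq b t with hL
  set C := ir b t with hC
  set UU := Ublk θ B v K L with hUU
  set VV := Vblk θ B v K L with hVV
  set X := (pFs θ (UU.drop (R + 1)) VV).1 with hX
  have hulen : UU.length = a := Ublk_len θ B v hB hv K L
  have hvlen : VV.length = b := Vblk_len θ B v hB hv K L
  have hXlen : X.length = b := by rw [hX, pFs_len1, hvlen]
  have hRlt : R < a := (iq_ir_spec ha s).2
  have hClt : C < b := (iq_ir_spec hb t).2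
  -- step 1 : cellF (s-1) t = X.getD C dn
  have step1 : cellF θ a b B v dn (s - 1) t = X.getD C dn := by
    rcases iq_ir_pred ha s with ⟨h1, h2, h3⟩ | ⟨h1, h2, h3⟩
    · rw [cellF, h2, h3, ← hK, ← hL, ← hC, ← hR, ← hUU, ← hVV, ← hX]
    · have hdrop : UU.drop (R + 1) = [] := by
        apply List.drop_eq_nil_of_le; omega
      have hX' : X = VV := by rw [hX, hdrop, pFs_nil]
      rw [cellF, h2, h3, ← hK, ← hL, ← hC]
      rw [List.drop_zero]
      have := blkB2 θ B v (K + 1) L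
      have hKK : K + 1 - 1 = K := by ring
      rw [hKK] at this
      rw [← this, ← hVV, hX']
  -- step 2 : cellF s t = ((pF θ i X).1).getD C dn
  have hdropR : UU.drop R = UU.getD R dm :: UU.drop (R + 1) := by
    have hRlt' : R < UU.length := by omega
    rw [List.getD_eq_getElem UU dm hRlt']
    exact List.drop_eq_getElem_cons hRlt'
  have step2 : cellF θ a b B v dn s t =
      ((pF θ (UU.getD R dm) X).1).getD C dn := by
    rw [cellF, ← hK, ← hL, ← hC, ← hR, ← hUU, ← hVV, hdropR, pFs_cons, ← hX]
  -- step 3 : cellE s t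
  have step3 : cellE θ a b B v dm s t = (pF θ (UU.getD R dm) (X.take C)).2 := rfl
  -- step 4 : cellE s (t-1) = (pF θ i (X.take (C+1))).2
  have step4 : cellE θ a b B v dm s (t - 1) =
      (pF θ (UU.getD R dm) (X.take (C + 1))).2 := by
    rcases iq_ir_pred hb t with ⟨h1, h2, h3⟩ | ⟨h1, h2, h3⟩
    · rw [cellE, h2, h3, ← hK, ← hL, ← hC, ← hR, ← hUU, ← hVV, ← hX]
    · have htake : X.take (C + 1) = X := by
        apply List.take_of_length_le; omega
      rw [cellE, h2, h3, ← hK, ← hR, ← hL]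
      rw [List.take_zero, htake]
      simp only [pF_nil]
      rw [blkB1 θ B v K L, ← hUU, ← hVV]
      rw [pFs_snd_getD θ dm UU VV R (by omega), ← hX]
  rw [step1, step2, step3, step4]
  exact pF_take_getD θ dn C X (UU.getD R dm) (by omega)

/-- reading the top e-word of a block from the cell grid -/
lemma readU (ha : 0 < a) (hb : 0 < b) (k l : ℤ) (r : ℕ) (hr : r < a) :
    cellE θ a b B v dm (-(k * a) - r) (-(l * b)) = (Ublk θ B v k l).getD r dm := by
  have h1 := iq_ir_unique ha (-(k * a) - r) k r hr (by push_cast; ring)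
  have h2 := iq_ir_unique hb (-(l * b)) l 0 hb (by push_cast; ring)
  rw [cellE, h1.1, h1.2, h2.1, h2.2]
  rfl

/-- reading the left f-word of a block from the cell grid -/
lemma readV (ha : 0 < a) (hb : 0 < b) (k l : ℤ) (c : ℕ) (hc : c < b) :
    cellF θ a b B v dn (-((k + 1) * a)) (-(l * b) - c) = (Vblk θ B v k l).getD c dn := by
  have h1 := iq_ir_unique ha (-((k + 1) * a)) (k + 1) 0 ha (by push_cast; ring)
  have h2 := iq_ir_unique hb (-(l * b) - c) l c hc (by push_cast; ring)
  rw [cellF, h1.1, h1.2, h2.1, h2.2, List.drop_zero]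
  have := blkB2 θ B v (k + 1) l
  have hKK : k + 1 - 1 = k := by ring
  rw [hKK] at this
  rw [← this]

end Cells

end Stmt18

open Stmt18 in
/-- If every tail of `F_θ⁺` (encoded as a compatible grid of integer data) is
eventually `(a,-b)`-periodic, then in the unique factorization
`e_u f_v = f_{v'} e_{u'}` (computed by the commuting maps `pastF`/`pastFs`
determined by `θ`), the word `u'` depends only on `v ∈ nᵇ` and not on `u ∈ mᵃ`. -/
theorem stmt_18 (m n a b : ℕ) (hm : 2 ≤ m) (ha : 0 < a) (hb : 0 < b)
    (θ : Equiv.Perm (Fin m × Fin n))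
    (pastF : Fin m → List (Fin n) → List (Fin n) × Fin m)
    (hpastF_nil : ∀ i : Fin m, pastF i [] = ([], i))
    (hpastF_cons : ∀ (i : Fin m) (j : Fin n) (rest : List (Fin n)),
      pastF i (j :: rest) =
        ((θ (i, j)).2 :: (pastF (θ (i, j)).1 rest).1, (pastF (θ (i, j)).1 rest).2))
    (pastFs : List (Fin m) → List (Fin n) → List (Fin n) × List (Fin m))
    (hpastFs_nil : ∀ v : List (Fin n), pastFs [] v = (v, []))
    (hpastFs_cons : ∀ (i : Fin m) (u : List (Fin m)) (v : List (Fin n)),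
      pastFs (i :: u) v =
        ((pastF i (pastFs u v).1).1, (pastF i (pastFs u v).1).2 :: (pastFs u v).2))
    (hper : ∀ (I : ℤ → ℤ → Fin m) (J : ℤ → ℤ → Fin n),
      (∀ s t : ℤ, s ≤ 0 → t ≤ 0 → θ (I s t, J (s - 1) t) = (I s (t - 1), J s t)) →
      ∃ T : ℤ, T ≤ 0 ∧ ∀ s t : ℤ, s ≤ T → t ≤ T →
        I (s + a) (t - b) = I s t ∧ J (s + a) (t - b) = J s t) :
    ∀ v : List (Fin n), v.length = b →
      ∀ u₁ u₂ : List (Fin m), u₁.length = a → u₂.length = a →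
        (pastFs u₁ v).2 = (pastFs u₂ v).2 := by
  intro v hv u₁ u₂ hu₁ hu₂
  -- identify the abstract maps with the concrete ones
  have hpF : pastF = pF θ := by
    funext i w
    induction w generalizing i with
    | nil => simp [hpastF_nil]
    | cons j rest ih => rw [hpastF_cons, pF_cons, ih]
  have hpFs : pastFs = pFs θ := by
    funext u w
    induction u with
    | nil => simp [hpastFs_nil]
    | cons i u ih => rw [hpastFs_cons, pFs_cons, ih, hpF]
  -- default elements
  have hm0 : 0 < m := by omega
  set dm : Fin m := ⟨0, hm0⟩ with hdm
  have hn0 : 0 < n := by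
    rcases v with _ | ⟨j, _⟩
    · simp at hv; omega
    · exact j.pos
  set dn : Fin n := ⟨0, hn0⟩ with hdn
  -- the staircase block data
  set B : ℤ → List (Fin m) := fun k => if k % 4 = 0 then u₂ else u₁ with hBdef
  have hBlen : ∀ k, (B k).length = a := by
    intro k
    show (if k % 4 = 0 then u₂ else u₁).length = a
    split
    · exact hu₂
    · exact hu₁
  -- apply the periodicity hypothesis to the constructed grid
  obtain ⟨T, hT, hp⟩ := hper (cellE θ a b B v dm) (cellF θ a b B v dn)
    (fun s t _ _ => cell_compat θ B v dm dn ha hb hBlen hv s t)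
  set N : ℤ := max 1 (-T) with hN
  have hN1 : (1 : ℤ) ≤ N := le_max_left _ _
  have hNT : -T ≤ N := le_max_right _ _
  -- transfer periodicity to the block level
  have hUper : ∀ k l : ℤ, N ≤ k → N ≤ l →
      Ublk θ B v (k - 1) (l + 1) = Ublk θ B v k l := by
    intro k l hk hl
    have hlen1 : (Ublk θ B v (k - 1) (l + 1)).length = a := Ublk_len θ B v hBlen hv _ _
    have hlen2 : (Ublk θ B v k l).length = a := Ublk_len θ B v hBlen hv _ _
    apply List.ext_getElem (by rw [hlen1, hlen2])
    intro r h₁ h₂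
    have hr : r < a := by omega
    rw [← List.getD_eq_getElem _ dm h₁, ← List.getD_eq_getElem _ dm h₂]
    rw [← readU θ B v dm ha hb (k - 1) (l + 1) r hr, ← readU θ B v dm ha hb k l r hr]
    have hka : k ≤ k * a := le_mul_of_one_le_right (by omega) (by exact_mod_cast ha)
    have hlb : l ≤ l * b := le_mul_of_one_le_right (by omega) (by exact_mod_cast hb)
    have hrpos : (0 : ℤ) ≤ (r : ℤ) := Int.natCast_nonneg r
    have hs : -(k * (a : ℤ)) - r ≤ T := by omega
    have ht : -(l * (b : ℤ)) ≤ T := by omega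
    have hper1 := (hp (-(k * (a : ℤ)) - r) (-(l * (b : ℤ))) hs ht).1
    rw [show -(k * (a : ℤ)) - (r : ℤ) + (a : ℤ) = -((k - 1) * a) - r from by ring,
      show -(l * (b : ℤ)) - (b : ℤ) = -((l + 1) * b) from by ring] at hper1
    exact hper1
  have hVper : ∀ k l : ℤ, N ≤ k → N ≤ l →
      Vblk θ B v (k - 1) (l + 1) = Vblk θ B v k l := by
    intro k l hk hl
    have hlen1 : (Vblk θ B v (k - 1) (l + 1)).length = b := Vblk_len θ B v hBlen hv _ _
    have hlen2 : (Vblk θ B v k l).length = b := Vblk_len θ B v hBlen hv _ _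
    apply List.ext_getElem (by rw [hlen1, hlen2])
    intro c h₁ h₂
    have hc : c < b := by omega
    rw [← List.getD_eq_getElem _ dn h₁, ← List.getD_eq_getElem _ dn h₂]
    rw [← readV θ B v dn ha hb (k - 1) (l + 1) c hc, ← readV θ B v dn ha hb k l c hc]
    have hka : k + 1 ≤ (k + 1) * a := le_mul_of_one_le_right (by omega) (by exact_mod_cast ha)
    have hlb : l ≤ l * b := le_mul_of_one_le_right (by omega) (by exact_mod_cast hb)
    have hcpos : (0 : ℤ) ≤ (c : ℤ) := Int.natCast_nonneg c
    have hs : -((k + 1) * (a : ℤ)) ≤ T := by omega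
    have ht : -(l * (b : ℤ)) - c ≤ T := by omega
    have hper2 := (hp (-((k + 1) * (a : ℤ))) (-(l * (b : ℤ)) - c) hs ht).2
    rw [show -((k + 1) * (a : ℤ)) + (a : ℤ) = -((k - 1 + 1) * a) from by ring,
      show -(l * (b : ℤ)) - (c : ℤ) - (b : ℤ) = -((l + 1) * b) - c from by ring] at hper2
    exact hper2
  -- the key equation forced by eventual periodicity
  have keyEq : ∀ k : ℤ, N ≤ k →
      pFs θ ((pFs θ (B k) v).2) ((pFs θ (B (k + 1)) v).1) = (v, B (k + 1)) := by
    intro k hk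
    have h1 : Ublk θ B v k (k + 1) = (pFs θ (B k) v).2 := by
      have h := blkB1 θ B v k k
      rw [Ukk, Vkk] at h
      exact h
    have h2 : Vblk θ B v k (k + 1) = (pFs θ (B (k + 1)) v).1 := by
      have h := blkB2 θ B v (k + 1) (k + 1)
      rw [Ukk, Vkk, show k + 1 - 1 = k from by ring] at h
      exact h
    have h3 : Ublk θ B v k (k + 2) = B (k + 1) := by
      have h := hUper (k + 1) (k + 1) (by omega) (by omega)
      rw [show k + 1 - 1 = k from by ring, show k + 1 + 1 = k + 2 from by ring, Ukk] at h
      exact h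
    have h4 : Vblk θ B v (k - 1) (k + 1) = v := by
      have h := hVper k k hk hk
      rw [Vkk] at h
      exact h
    have h5 := blkB1 θ B v k (k + 1)
    have h6 := blkB2 θ B v k (k + 1)
    rw [h1, h2, show k + 1 + 1 = k + 2 from by ring, h3] at h5
    rw [h1, h2, h4] at h6
    exact Prod.ext h6.symm h5.symm
  -- evaluate the key equation at two suitable indices
  set k₀ : ℤ := 4 * (N + 1) with hk₀
  have hB0 : B k₀ = u₂ := by
    have h : k₀ % 4 = 0 := by omega
    show (if k₀ % 4 = 0 then u₂ else u₁) = u₂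
    rw [if_pos h]
  have hB1 : B (k₀ + 1) = u₁ := by
    have h : ¬((k₀ + 1) % 4 = 0) := by omega
    show (if (k₀ + 1) % 4 = 0 then u₂ else u₁) = u₁
    rw [if_neg h]
  have hB2 : B (k₀ + 2) = u₁ := by
    have h : ¬((k₀ + 2) % 4 = 0) := by omega
    show (if (k₀ + 2) % 4 = 0 then u₂ else u₁) = u₁
    rw [if_neg h]
  have eqA := keyEq k₀ (by omega)
  have eqB := keyEq (k₀ + 1) (by omega)
  rw [hB0, hB1] at eqA
  rw [hB1, show k₀ + 1 + 1 = k₀ + 2 from by ring, hB2] at eqB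
  have iA := pFsinv_pFs θ ((pFs θ u₂ v).2) ((pFs θ u₁ v).1)
  have iB := pFsinv_pFs θ ((pFs θ u₁ v).2) ((pFs θ u₁ v).1)
  rw [eqA] at iA
  rw [eqB] at iB
  have hfinal : ((pFs θ u₂ v).2, (pFs θ u₁ v).1) = ((pFs θ u₁ v).2, (pFs θ u₁ v).1) := by
    rw [← iA, ← iB]
  have := congrArg Prod.fst hfinal
  rw [hpFs]
  exact this.symm
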